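/- Let r be a positive integer and let Z be a random variable with the chi-squared distribution with r degrees of freedom. Then for every ε ∈ (0,1), the tail bound Pr(|Z/r − 1| ≥ ε) ≤ 2·exp(−r·ε²/8) holds. -/

import Mathlib

open MeasureTheory ProbabilityTheory Real Set
open scoped NNReal ENNReal

/-- mgf-type integral for the gamma distribution with rate 1/2. -/
lemma aux_gamma_exp_lintegral {a : ℝ} (ha : 0 < a) {t : ℝ} (ht : t < 1/2) :
    ∫⁻ x, ENNReal.ofReal (Real.exp (t * x)) ∂(gammaMeasure a (1/2))
      = ENNReal.ofReal ((1 - 2*t) ^ (-a)) := by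
  set b : ℝ := 1/2 - t with hb
  have hb0 : 0 < b := by simp [hb]; linarith
  have hmeasg : Measurable fun x : ℝ => ENNReal.ofReal (Real.exp (t * x)) :=
    (Real.measurable_exp.comp (measurable_const_mul t)).ennreal_ofReal
  have hpdf : Measurable (gammaPDF a (1/2)) := by
    unfold gammaPDF; exact (measurable_gammaPDFReal a (1/2)).ennreal_ofReal
  rw [gammaMeasure, lintegral_withDensity_eq_lintegral_mul _ hpdf hmeasg]
  have key : ∫⁻ x, (gammaPDF a (1/2) * fun x => ENNReal.ofReal (Real.exp (t * x))) x
      = ∫⁻ x in Ici (0:ℝ),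
        ENNReal.ofReal ((1/2) ^ a / Real.Gamma a * (x ^ (a-1) * Real.exp (-(b * x)))) := by
    rw [← lintegral_add_compl _ (measurableSet_Ici (a := (0:ℝ)))]
    have h1 : ∫⁻ x in (Ici (0:ℝ))ᶜ,
        (gammaPDF a (1/2) * fun x => ENNReal.ofReal (Real.exp (t * x))) x = 0 := by
      rw [compl_Ici]
      rw [setLIntegral_congr_fun (g := fun _ => 0) measurableSet_Iio
        (fun x (hx : x < 0) => by
          simp only [Pi.mul_apply, gammaPDF_of_neg hx, zero_mul]), lintegral_zero]
    rw [h1, add_zero]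
    refine setLIntegral_congr_fun measurableSet_Ici (fun x (hx : 0 ≤ x) => ?_)
    simp only [Pi.mul_apply, gammaPDF_of_nonneg hx]
    rw [← ENNReal.ofReal_mul (by positivity)]
    congr 1
    rw [mul_assoc, mul_assoc, ← Real.exp_add]
    rw [hb]; ring_nf
  rw [key]
  have hint : IntegrableOn (fun x : ℝ => x ^ (a-1) * Real.exp (-(b*x))) (Ici 0) := by
    rw [integrableOn_Ici_iff_integrableOn_Ioi]
    refine (integrableOn_rpow_mul_exp_neg_mul_rpow
      (by linarith : (-1:ℝ) < a-1) (zero_lt_one : (0:ℝ) < 1) hb0).congr_fun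
      (fun x hx => by dsimp only; rw [Real.rpow_one, neg_mul]) measurableSet_Ioi
  set C : ℝ := (1/2) ^ a / Real.Gamma a with hC
  have hC0 : 0 ≤ C := by positivity
  rw [← ofReal_integral_eq_lintegral_ofReal (hint.const_mul C)
    (by rw [Filter.EventuallyLE, ae_restrict_iff' measurableSet_Ici]
        exact ae_of_all _ fun x (hx : 0 ≤ x) => by positivity)]
  congr 1
  rw [integral_const_mul, integral_Ici_eq_integral_Ioi,
    integral_rpow_mul_exp_neg_mul_Ioi ha hb0]
  have h2b : 1 - 2*t = 2*b := by rw [hb]; ring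
  have hGa := Real.Gamma_pos_of_pos ha
  have hstep : C * ((1/b) ^ a * Real.Gamma a) = (1/2:ℝ) ^ a * (1/b) ^ a := by
    rw [hC]; field_simp
  rw [hstep, ← Real.mul_rpow (by norm_num) (by positivity), h2b,
    Real.rpow_neg (by positivity), ← Real.inv_rpow (by positivity)]
  congr 1
  field_simp

lemma aux_chernoff {Ω : Type*} [MeasurableSpace Ω] (μ : Measure Ω) (W : Ω → ℝ)
    (hW : Measurable W) (c : ℝ) :
    μ {ω | c ≤ W ω}
      ≤ ENNReal.ofReal (Real.exp (-c)) * ∫⁻ ω, ENNReal.ofReal (Real.exp (W ω)) ∂μ := by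
  have hset : {ω | c ≤ W ω}
      = {ω | ENNReal.ofReal (Real.exp c) ≤ ENNReal.ofReal (Real.exp (W ω))} := by
    ext ω
    simp [ENNReal.ofReal_le_ofReal_iff (Real.exp_pos _).le, Real.exp_le_exp]
  have h := mul_meas_ge_le_lintegral₀ (μ := μ)
    ((Real.measurable_exp.comp hW).ennreal_ofReal.aemeasurable) (ENNReal.ofReal (Real.exp c))
  calc μ {ω | c ≤ W ω}
      = ENNReal.ofReal (Real.exp (-c))
        * (ENNReal.ofReal (Real.exp c) * μ {ω | c ≤ W ω}) := by
        rw [← mul_assoc, ← ENNReal.ofReal_mul (Real.exp_pos _).le, ← Real.exp_add,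
          neg_add_cancel, Real.exp_zero, ENNReal.ofReal_one, one_mul]
    _ ≤ _ := by rw [hset]; exact mul_le_mul_right h _

/-- Concentration of the chi-squared distribution with `r` degrees of freedom:
`Pr(|Z/r − 1| ≥ ε) ≤ 2 exp(−r ε²/8)`. -/
theorem apollo_stmt5 {Ω : Type*} [MeasurableSpace Ω] (μ : Measure Ω) [IsProbabilityMeasure μ]
    (r : ℕ) (hr : 0 < r)
    (Z : Ω → ℝ) (hZmeas : Measurable Z)
    (hZlaw : μ.map Z = gammaMeasure ((r : ℝ) / 2) (1 / 2))
    (ε : ℝ) (hε : ε ∈ Set.Ioo (0 : ℝ) 1) :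
    μ {ω | ε ≤ |Z ω / (r : ℝ) - 1|}
      ≤ ENNReal.ofReal (2 * Real.exp (-(r : ℝ) * ε ^ 2 / 8)) := by
  obtain ⟨hε0, hε1⟩ := hε
  have hrpos : (0:ℝ) < r := Nat.cast_pos.mpr hr
  set a : ℝ := (r:ℝ)/2 with hadef
  have ha : 0 < a := by positivity
  have hmgf : ∀ t : ℝ, t < 1/2 →
      ∫⁻ ω, ENNReal.ofReal (Real.exp (t * Z ω)) ∂μ = ENNReal.ofReal ((1 - 2*t) ^ (-a)) := by
    intro t ht
    rw [← aux_gamma_exp_lintegral ha ht, ← hZlaw,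
      lintegral_map (show Measurable fun x : ℝ => ENNReal.ofReal (Real.exp (t * x)) by fun_prop) hZmeas]
  -- Upper tail
  set t₁ : ℝ := ε/(2*(1+ε)) with ht₁def
  have ht₁0 : 0 < t₁ := by positivity
  have ht₁ : t₁ < 1/2 := by
    rw [ht₁def, div_lt_iff₀ (by positivity)]; nlinarith
  have hA : μ {ω | (r:ℝ)*(1+ε) ≤ Z ω}
      ≤ ENNReal.ofReal (Real.exp (-(t₁*((r:ℝ)*(1+ε)))) * (1 - 2*t₁) ^ (-a)) := by
    have hsub : {ω | (r:ℝ)*(1+ε) ≤ Z ω} ⊆ {ω | t₁*((r:ℝ)*(1+ε)) ≤ t₁ * Z ω} :=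
      fun ω h => mul_le_mul_of_nonneg_left h ht₁0.le
    refine le_trans (measure_mono hsub) ?_
    have h := aux_chernoff μ (fun ω => t₁ * Z ω) (hZmeas.const_mul t₁) (t₁*((r:ℝ)*(1+ε)))
    rwa [hmgf t₁ ht₁, ← ENNReal.ofReal_mul (Real.exp_pos _).le] at h
  have hAreal : Real.exp (-(t₁*((r:ℝ)*(1+ε)))) * (1 - 2*t₁) ^ (-a)
      ≤ Real.exp (-(r:ℝ) * ε^2/8) := by
    have h1 : (1:ℝ)+ε ≠ 0 := by positivity
    have h1t : 1 - 2*t₁ = (1+ε)⁻¹ := by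
      rw [ht₁def]; field_simp
      ring
    have hq : 1 + ε ≤ Real.exp (ε - ε^2/4) := by
      have h := Real.quadratic_le_exp_of_nonneg (x := ε - ε^2/4) (by nlinarith)
      nlinarith [h]
    have hpow : (1 - 2*t₁) ^ (-a) ≤ Real.exp ((ε - ε^2/4)*a) := by
      rw [h1t, Real.rpow_neg (by positivity), Real.inv_rpow (by positivity), inv_inv]
      calc (1+ε) ^ a ≤ (Real.exp (ε - ε^2/4)) ^ a :=
            Real.rpow_le_rpow (by positivity) hq ha.le
        _ = Real.exp ((ε - ε^2/4)*a) := (Real.exp_mul _ _).symm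
    calc Real.exp (-(t₁*((r:ℝ)*(1+ε)))) * (1 - 2*t₁) ^ (-a)
        ≤ Real.exp (-(t₁*((r:ℝ)*(1+ε)))) * Real.exp ((ε - ε^2/4)*a) :=
          mul_le_mul_of_nonneg_left hpow (Real.exp_pos _).le
      _ = Real.exp (-(t₁*((r:ℝ)*(1+ε))) + (ε - ε^2/4)*a) := by rw [← Real.exp_add]
      _ ≤ Real.exp (-(r:ℝ) * ε^2/8) := by
          apply Real.exp_le_exp.mpr
          have hexp : -(t₁*((r:ℝ)*(1+ε))) + (ε - ε^2/4)*a = -(r:ℝ)*ε^2/8 := by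
            rw [ht₁def, hadef]; field_simp; ring
          exact le_of_eq hexp
  -- Lower tail
  set t₂ : ℝ := ε/(2*(1-ε)) with ht₂def
  have h1ε : (0:ℝ) < 1 - ε := by linarith
  have ht₂0 : 0 < t₂ := by positivity
  have ht₂ : -t₂ < 1/2 := by
    have : 0 < t₂ := ht₂0
    linarith
  have hB : μ {ω | Z ω ≤ (r:ℝ)*(1-ε)}
      ≤ ENNReal.ofReal (Real.exp (-((-t₂)*((r:ℝ)*(1-ε)))) * (1 - 2*(-t₂)) ^ (-a)) := by
    have hsub : {ω | Z ω ≤ (r:ℝ)*(1-ε)} ⊆ {ω | (-t₂)*((r:ℝ)*(1-ε)) ≤ (-t₂) * Z ω} :=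
      fun ω h => mul_le_mul_of_nonpos_left h (neg_nonpos.mpr ht₂0.le)
    refine le_trans (measure_mono hsub) ?_
    have h := aux_chernoff μ (fun ω => (-t₂) * Z ω) (hZmeas.const_mul (-t₂))
      ((-t₂)*((r:ℝ)*(1-ε)))
    rwa [hmgf (-t₂) ht₂, ← ENNReal.ofReal_mul (Real.exp_pos _).le] at h
  have hBreal : Real.exp (-((-t₂)*((r:ℝ)*(1-ε)))) * (1 - 2*(-t₂)) ^ (-a)
      ≤ Real.exp (-(r:ℝ) * ε^2/8) := by
    have h2 : (1:ℝ)-ε ≠ 0 := h1ε.ne'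
    have h1t : 1 - 2*(-t₂) = (1-ε)⁻¹ := by
      rw [ht₂def]; field_simp
      ring
    have hq : 1 - ε ≤ Real.exp (-(ε + ε^2/4)) := by
      have h1 : 1 - (ε + ε^2/4)/2 ≤ Real.exp (-((ε + ε^2/4)/2)) := by
        linarith [Real.add_one_le_exp (-((ε + ε^2/4)/2))]
      have h2 : (0:ℝ) ≤ 1 - (ε + ε^2/4)/2 := by nlinarith
      have h3 : (1 - (ε + ε^2/4)/2) * (1 - (ε + ε^2/4)/2)
          ≤ Real.exp (-((ε + ε^2/4)/2)) * Real.exp (-((ε + ε^2/4)/2)) :=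
        mul_le_mul h1 h1 h2 (Real.exp_pos _).le
      rw [← Real.exp_add] at h3
      calc 1 - ε ≤ (1 - (ε + ε^2/4)/2) * (1 - (ε + ε^2/4)/2) := by nlinarith
        _ ≤ Real.exp (-((ε + ε^2/4)/2) + -((ε + ε^2/4)/2)) := h3
        _ = Real.exp (-(ε + ε^2/4)) := by ring_nf
    have hpow : (1 - 2*(-t₂)) ^ (-a) ≤ Real.exp (-(ε + ε^2/4)*a) := by
      rw [h1t, Real.rpow_neg (by positivity), Real.inv_rpow (by positivity), inv_inv]
      calc (1-ε) ^ a ≤ (Real.exp (-(ε + ε^2/4))) ^ a :=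
            Real.rpow_le_rpow h1ε.le hq ha.le
        _ = Real.exp (-(ε + ε^2/4)*a) := (Real.exp_mul _ _).symm
    calc Real.exp (-((-t₂)*((r:ℝ)*(1-ε)))) * (1 - 2*(-t₂)) ^ (-a)
        ≤ Real.exp (-((-t₂)*((r:ℝ)*(1-ε)))) * Real.exp (-(ε + ε^2/4)*a) :=
          mul_le_mul_of_nonneg_left hpow (Real.exp_pos _).le
      _ = Real.exp (-((-t₂)*((r:ℝ)*(1-ε))) + -(ε + ε^2/4)*a) := by rw [← Real.exp_add]
      _ ≤ Real.exp (-(r:ℝ) * ε^2/8) := by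
          apply Real.exp_le_exp.mpr
          have hexp : -((-t₂)*((r:ℝ)*(1-ε))) + -(ε + ε^2/4)*a = -(r:ℝ)*ε^2/8 := by
            rw [ht₂def, hadef]; field_simp; ring
          exact le_of_eq hexp
  -- combine
  have hsplit : {ω | ε ≤ |Z ω / (r:ℝ) - 1|}
      ⊆ {ω | (r:ℝ)*(1+ε) ≤ Z ω} ∪ {ω | Z ω ≤ (r:ℝ)*(1-ε)} := by
    intro ω hω
    simp only [Set.mem_setOf_eq] at hω
    rcases le_abs.mp hω with h | h
    · left
      show (r:ℝ)*(1+ε) ≤ Z ω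
      have h2 : 1 + ε ≤ Z ω / r := by linarith
      calc (r:ℝ)*(1+ε) ≤ (r:ℝ) * (Z ω / r) := mul_le_mul_of_nonneg_left h2 hrpos.le
        _ = Z ω := by field_simp
    · right
      show Z ω ≤ (r:ℝ)*(1-ε)
      have h2 : Z ω / r ≤ 1 - ε := by linarith
      calc Z ω = (r:ℝ) * (Z ω / r) := by field_simp
        _ ≤ (r:ℝ)*(1-ε) := mul_le_mul_of_nonneg_left h2 hrpos.le
  calc μ {ω | ε ≤ |Z ω / (r:ℝ) - 1|}
      ≤ μ ({ω | (r:ℝ)*(1+ε) ≤ Z ω} ∪ {ω | Z ω ≤ (r:ℝ)*(1-ε)}) := measure_mono hsplit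
    _ ≤ μ {ω | (r:ℝ)*(1+ε) ≤ Z ω} + μ {ω | Z ω ≤ (r:ℝ)*(1-ε)} := measure_union_le _ _
    _ ≤ ENNReal.ofReal (Real.exp (-(r:ℝ) * ε^2/8))
        + ENNReal.ofReal (Real.exp (-(r:ℝ) * ε^2/8)) :=
        add_le_add (hA.trans (ENNReal.ofReal_le_ofReal hAreal))
          (hB.trans (ENNReal.ofReal_le_ofReal hBreal))
    _ = ENNReal.ofReal (2 * Real.exp (-(r : ℝ) * ε ^ 2 / 8)) := by
        rw [← ENNReal.ofReal_add (Real.exp_pos _).le (Real.exp_pos _).le, two_mul]
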